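/- Let σ be a row-strict tableau of shape λ ⊢ n and let d be a divisor of σ (so σ decomposes into blocks of size d). Then the map (i, j) ↦ (di, dj) is a bijection from the set of Springer pairs of σ/d that are not Springer inversions onto the set of Springer pairs of σ that are not Springer inversions. Consequently, |pairs(σ)| − |inv(σ)| = |pairs(σ/d)| − |inv(σ/d)|. -/

import Mathlib

open scoped Classical

/-- The set of boxes (row, column), 0-indexed, of the Young diagram of a partition given
as a list of row lengths. -/
def cells (L : List ℕ) : Set (ℕ × ℕ) := {p | p.1 < L.length ∧ p.2 < L.getD p.1 0}

/-- `pos` encodes a tableau of shape `L` with entries `1, …, n`:  `pos i` is the (row,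
column) of the box labeled `i`.  It is injective on `{1,…,n}` with image the set of
boxes, and is normalized to `(0,0)` outside `{1,…,n}`. -/
def IsTab (L : List ℕ) (n : ℕ) (pos : ℕ → ℕ × ℕ) : Prop :=
  Set.InjOn pos (Set.Icc 1 n) ∧ pos '' Set.Icc 1 n = cells L ∧
    ∀ i, i ∉ Set.Icc 1 n → pos i = (0, 0)

/-- Row-strictness: entries increase along each row (left to right). -/
def RowStrict (n : ℕ) (pos : ℕ → ℕ × ℕ) : Prop :=
  ∀ i j, i ∈ Set.Icc 1 n → j ∈ Set.Icc 1 n →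
    (pos j).1 = (pos i).1 → (pos j).2 = (pos i).2 + 1 → i < j

/-- A row-strict tableau of shape `L` with entries `1, …, n`. -/
def IsRST (L : List ℕ) (n : ℕ) (pos : ℕ → ℕ × ℕ) : Prop :=
  IsTab L n pos ∧ RowStrict n pos

/-- `(i, j)` with `i > j` is a Springer pair: `i` lies in the same column as `j` or in a
column strictly to its left, and if the box directly right of `j` is labeled `r` then
`i < r`. -/
def SpringerPair (n : ℕ) (pos : ℕ → ℕ × ℕ) (i j : ℕ) : Prop :=
  1 ≤ j ∧ j < i ∧ i ≤ n ∧ (pos i).2 ≤ (pos j).2 ∧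
    ∀ r ∈ Set.Icc 1 n, pos r = ((pos j).1, (pos j).2 + 1) → i < r

/-- A Springer inversion is a Springer pair `(i, j)` such that if `i` is in the same
column as `j` then `i` lies strictly below `j`. -/
def SpringerInv (n : ℕ) (pos : ℕ → ℕ × ℕ) (i j : ℕ) : Prop :=
  SpringerPair n pos i j ∧ ((pos i).2 = (pos j).2 → (pos j).1 < (pos i).1)

/-- The number of Springer pairs of a tableau. -/
noncomputable def pairsCount (n : ℕ) (pos : ℕ → ℕ × ℕ) : ℕ :=
  {p : ℕ × ℕ | SpringerPair n pos p.1 p.2}.ncard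

/-- The number of Springer inversions of a tableau. -/
noncomputable def invCount (n : ℕ) (pos : ℕ → ℕ × ℕ) : ℕ :=
  {p : ℕ × ℕ | SpringerInv n pos p.1 p.2}.ncard

/-- `d` is a divisor of the tableau: `d ∣ n` and the tableau decomposes into blocks of
`d` consecutive boxes with consecutive labels, i.e. whenever `d ∤ i` the box labeled
`i + 1` is directly to the right of the box labeled `i`. -/
def TabDivisor (n d : ℕ) (pos : ℕ → ℕ × ℕ) : Prop :=
  d ∣ n ∧ ∀ i, 1 ≤ i → i < n → ¬ d ∣ i → pos (i + 1) = ((pos i).1, (pos i).2 + 1)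

/-- The quotient tableau `σ/d`: each block of `d` boxes is merged into a single box,
labeled in the same relative order (the block containing `d·m` gets label `m`). -/
def quotTab (d : ℕ) (pos : ℕ → ℕ × ℕ) : ℕ → ℕ × ℕ :=
  fun m => ((pos (d * m)).1, ((pos (d * m)).2 + 1) / d - 1)

/-- `Σ_i (i−1)·λ_i`, the dimension of the Springer fiber of Jordan type `λ`. -/
def dimB (L : List ℕ) : ℕ := ∑ i ∈ Finset.range L.length, i * L.getD i 0

/-- `L` is a partition of `n`: weakly decreasing positive parts summing to `n`. -/
def IsPartition (L : List ℕ) (n : ℕ) : Prop :=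
  L.sum = n ∧ L.Pairwise (· ≥ ·) ∧ ∀ x ∈ L, 0 < x

section Aux

variable {L : List ℕ} {n d : ℕ} {σ : ℕ → ℕ × ℕ}

lemma aux_mem_cells (hσ : IsTab L n σ) {i : ℕ} (h1 : 1 ≤ i) (h2 : i ≤ n) :
    σ i ∈ cells L := by
  rw [← hσ.2.1]; exact ⟨i, ⟨h1, h2⟩, rfl⟩

lemma aux_exists_label (hσ : IsTab L n σ) {p : ℕ × ℕ} (hp : p ∈ cells L) :
    ∃ j, 1 ≤ j ∧ j ≤ n ∧ σ j = p := by
  rw [← hσ.2.1] at hp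
  obtain ⟨j, hj, hje⟩ := hp
  exact ⟨j, hj.1, hj.2, hje⟩

lemma aux_step (hdiv : TabDivisor n d σ) {i : ℕ} (h1 : 1 ≤ i) (h2 : i ≤ n)
    (h3 : ¬ d ∣ i) : σ (i + 1) = ((σ i).1, (σ i).2 + 1) := by
  refine hdiv.2 i h1 ?_ h3
  rcases lt_or_eq_of_le h2 with h | h
  · exact h
  · exact absurd (h ▸ hdiv.1) h3

/-- The key modular fact: the column of the box labeled `i` is `≡ i - 1 (mod d)`. -/
lemma aux_mod (hσ : IsRST L n σ) (hd : 0 < d) (hdiv : TabDivisor n d σ) :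
    ∀ i, 1 ≤ i → i ≤ n → (d : ℤ) ∣ (((σ i).2 : ℤ) + 1 - i) := by
  intro i
  induction i using Nat.strong_induction_on with
  | _ i IH =>
    intro h1 hn
    -- first, a helper: if the column is positive, there is a smaller left neighbor
    have left_nb : 0 < (σ i).2 → ∃ j, 1 ≤ j ∧ j ≤ n ∧ j < i ∧
        σ j = ((σ i).1, (σ i).2 - 1) := by
      intro hc
      have hcell := aux_mem_cells hσ.1 h1 hn
      have hcell' : ((σ i).1, (σ i).2 - 1) ∈ cells L :=
        ⟨hcell.1, lt_of_le_of_lt (Nat.sub_le _ _) hcell.2⟩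
      obtain ⟨j, hj1, hjn, hje⟩ := aux_exists_label hσ.1 hcell'
      refine ⟨j, hj1, hjn, ?_, hje⟩
      apply hσ.2 j i ⟨hj1, hjn⟩ ⟨h1, hn⟩
      · rw [hje]
      · rw [hje]; simp; omega
    rcases Nat.lt_or_ge i 2 with h2 | h2
    · -- i = 1 : column must be 0
      have hi1 : i = 1 := by omega
      have hc0 : (σ i).2 = 0 := by
        by_contra hc
        obtain ⟨j, hj1, _, hji, _⟩ := left_nb (by omega)
        omega
      rw [hc0, hi1]; simp
    · by_cases hdi : d ∣ (i - 1)
      · rcases Nat.eq_zero_or_pos (σ i).2 with hc | hc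
        · -- column 0 : goal d ∣ 1 - i  and  d ∣ i - 1
          rw [hc]
          have hcast : ((0 : ℕ) : ℤ) + 1 - i = -(((i - 1 : ℕ) : ℤ)) := by
            push_cast [Nat.cast_sub h1]; ring
          rw [hcast]
          exact (Int.natCast_dvd_natCast.mpr hdi).neg_right
        · obtain ⟨j, hj1, hjn, hji, hje⟩ := left_nb hc
          have hdj : d ∣ j := by
            by_contra hnd
            have hs := aux_step hdiv hj1 hjn hnd
            have hji' : j + 1 = i := by
              apply hσ.1.1 ⟨by omega, by omega⟩ ⟨h1, hn⟩
              rw [hs, hje, Prod.ext_iff]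
              constructor
              · rfl
              · show (σ i).2 - 1 + 1 = (σ i).2
                omega
            have hij : i - 1 = j := by omega
            rw [hij] at hdi
            exact hnd hdi
          have hIH := IH j hji hj1 hjn
          have hkey : ((σ i).2 : ℤ) + 1 - i =
              (((σ j).2 : ℤ) + 1 - j) + (j : ℤ) - (((i - 1 : ℕ) : ℤ)) := by
            have : ((σ j).2 : ℤ) = ((σ i).2 : ℤ) - 1 := by
              rw [hje]; push_cast [Nat.cast_sub (by omega : 1 ≤ (σ i).2)]; ring
            rw [this]
            push_cast [Nat.cast_sub h1]
            ring
          rw [hkey]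
          exact ((hIH.add (Int.natCast_dvd_natCast.mpr hdj)).sub
            (Int.natCast_dvd_natCast.mpr hdi))
      · -- d ∤ (i - 1): use the divisor step at i - 1
        have h1' : 1 ≤ i - 1 := by omega
        have hn' : i - 1 ≤ n := by omega
        have hs := aux_step hdiv h1' hn' hdi
        have he : i - 1 + 1 = i := by omega
        rw [he] at hs
        have hIH := IH (i - 1) (by omega) h1' hn'
        have hkey : ((σ i).2 : ℤ) + 1 - i = ((σ (i - 1)).2 : ℤ) + 1 - ((i - 1 : ℕ) : ℤ) := by
          rw [hs]
          push_cast [Nat.cast_sub h1]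
          ring
        rw [hkey]
        exact hIH

/-- The block containing `d*m` occupies `d` consecutive cells in one row. -/
lemma aux_block (hσ : IsRST L n σ) (hd : 0 < d) (hdiv : TabDivisor n d σ)
    {m : ℕ} (hm : 1 ≤ m) (hmn : d * m ≤ n) :
    ∀ k, k < d → k ≤ (σ (d * m)).2 ∧ σ (d * m - k) = ((σ (d * m)).1, (σ (d * m)).2 - k) := by
  have hdm : d ≤ d * m := Nat.le_mul_of_pos_right d hm
  intro k
  induction k with
  | zero => intro _; simp
  | succ k IHk =>
    intro hk
    obtain ⟨hk1, hk2⟩ := IHk (by omega)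
    have hi1 : 1 ≤ d * m - (k + 1) := by omega
    have hin : d * m - (k + 1) ≤ n := by omega
    have hnd : ¬ d ∣ (d * m - (k + 1)) := by
      rintro ⟨t, ht⟩
      rcases le_or_gt m t with h' | h'
      · have := Nat.mul_le_mul_left d h'
        omega
      · have : d * (t + 1) ≤ d * m := Nat.mul_le_mul_left d h'
        rw [Nat.mul_add, Nat.mul_one] at this
        omega
    have hs := aux_step hdiv hi1 hin hnd
    have he : d * m - (k + 1) + 1 = d * m - k := by omega
    rw [he, hk2] at hs
    rw [Prod.ext_iff] at hs
    simp only at hs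
    constructor
    · omega
    · rw [Prod.ext_iff]
      constructor
      · simp; omega
      · simp; omega

/-- The column of the quotient box: `(σ (d*m)).2 + 1 = d * ((σ/d) m).2 + d`. -/
lemma aux_q (hσ : IsRST L n σ) (hd : 0 < d) (hdiv : TabDivisor n d σ)
    {m : ℕ} (hm : 1 ≤ m) (hmn : d * m ≤ n) :
    (σ (d * m)).2 + 1 = d * ((quotTab d σ m).2 + 1) ∧ (quotTab d σ m).1 = (σ (d * m)).1 := by
  have h1 : 1 ≤ d * m := Nat.mul_pos hd hm
  have hmod := aux_mod hσ hd hdiv (d * m) h1 hmn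
  have hdm : (d : ℤ) ∣ ((d * m : ℕ) : ℤ) := ⟨m, by push_cast; ring⟩
  have hdvdZ : (d : ℤ) ∣ (((σ (d * m)).2 : ℤ) + 1) := by
    have := hmod.add hdm
    rwa [sub_add_cancel] at this
  have hdvd : d ∣ ((σ (d * m)).2 + 1) := by
    exact_mod_cast hdvdZ
  obtain ⟨t, ht⟩ := hdvd
  have ht1 : 1 ≤ t := by
    rcases Nat.eq_zero_or_pos t with h | h
    · rw [h, Nat.mul_zero] at ht; omega
    · exact h
  constructor
  · show (σ (d * m)).2 + 1 = d * (((σ (d * m)).2 + 1) / d - 1 + 1)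
    rw [ht, Nat.mul_div_cancel_left _ hd]
    congr 1
    omega
  · rfl

/-- A non-inversion Springer pair has both entries divisible by `d`, lies in one
column, with `i` weakly above `j`. -/
lemma aux_dvd (hσ : IsRST L n σ) (hd : 0 < d) (hdiv : TabDivisor n d σ) {i j : ℕ}
    (hp : SpringerPair n σ i j) (hni : ¬ SpringerInv n σ i j) :
    d ∣ i ∧ d ∣ j ∧ (σ i).2 = (σ j).2 ∧ ¬ ((σ j).1 < (σ i).1) := by
  obtain ⟨hj1, hji, hin, hcle, hrn⟩ := hp
  have hcol : (σ i).2 = (σ j).2 ∧ ¬ ((σ j).1 < (σ i).1) := by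
    by_contra hc
    exact hni ⟨⟨hj1, hji, hin, hcle, hrn⟩, fun he => by
      by_contra hlt
      exact hc ⟨he, hlt⟩⟩
  have hdj : d ∣ j := by
    by_contra hnd
    have hs := aux_step hdiv hj1 (le_trans (le_of_lt hji) hin) hnd
    have := hrn (j + 1) ⟨by omega, by omega⟩ hs
    omega
  have hdvdcj : (d : ℤ) ∣ (((σ j).2 : ℤ) + 1) := by
    have h := aux_mod hσ hd hdiv j hj1 (by omega)
    have h2 := h.add (Int.natCast_dvd_natCast.mpr hdj)
    rwa [sub_add_cancel] at h2
  have hdi : d ∣ i := by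
    have h := aux_mod hσ hd hdiv i (by omega) hin
    have hdvdci : (d : ℤ) ∣ (((σ i).2 : ℤ) + 1) := by rw [hcol.1]; exact hdvdcj
    have h3 := hdvdci.sub h
    have h4 : ((σ i).2 : ℤ) + 1 - (((σ i).2 : ℤ) + 1 - i) = (i : ℤ) := by ring
    rw [h4] at h3
    exact_mod_cast h3
  exact ⟨hdi, hdj, hcol.1, hcol.2⟩

/-- The key correspondence: `(a, b)` is a non-inversion Springer pair of `σ/d` iff
`(d*a, d*b)` is a non-inversion Springer pair of `σ`. -/
lemma aux_corr (hσ : IsRST L n σ) (hd : 0 < d) (hdiv : TabDivisor n d σ) (a b : ℕ) :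
    (SpringerPair (n / d) (quotTab d σ) a b ∧ ¬ SpringerInv (n / d) (quotTab d σ) a b) ↔
    (SpringerPair n σ (d * a) (d * b) ∧ ¬ SpringerInv n σ (d * a) (d * b)) := by
  have hND : d * (n / d) = n := Nat.mul_div_cancel' hdiv.1
  constructor
  · rintro ⟨⟨hb1, hba, han, hqc, hqrn⟩, hqni⟩
    have hb1' : 1 ≤ d * b := Nat.mul_pos hd hb1
    have hban : d * b < d * a := (Nat.mul_lt_mul_left hd).mpr hba
    have haN : d * a ≤ n := by
      calc d * a ≤ d * (n / d) := Nat.mul_le_mul_left d han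
      _ = n := hND
    have ha1 : 1 ≤ a := by omega
    have hqa := aux_q hσ hd hdiv ha1 haN
    have hqb := aux_q hσ hd hdiv hb1 (by omega)
    have hq2 : (quotTab d σ a).2 = (quotTab d σ b).2 ∧
        ¬ ((quotTab d σ b).1 < (quotTab d σ a).1) := by
      by_contra hc
      exact hqni ⟨⟨hb1, hba, han, hqc, hqrn⟩, fun he => by
        by_contra hlt
        exact hc ⟨he, hlt⟩⟩
    have hceq : (σ (d * a)).2 = (σ (d * b)).2 := by
      have h1 := hqa.1
      rw [hq2.1] at h1
      have h2 := hqb.1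
      omega
    have hrn : ∀ r ∈ Set.Icc 1 n, σ r = ((σ (d * b)).1, (σ (d * b)).2 + 1) → d * a < r := by
      rintro r ⟨hr1, hrle⟩ hre
      have hmr := aux_mod hσ hd hdiv r hr1 hrle
      have hdvdcb : (d : ℤ) ∣ (((σ (d * b)).2 : ℤ) + 1) :=
        ⟨((quotTab d σ b).2 + 1 : ℕ), by exact_mod_cast hqb.1⟩
      have hcrN : (σ r).2 = (σ (d * b)).2 + 1 := by rw [hre]
      rw [hcrN] at hmr
      push_cast at hmr
      have h4 := hdvdcb.sub hmr
      have e4 : ((σ (d * b)).2 : ℤ) + 1 - (((σ (d * b)).2 : ℤ) + 1 + 1 - r)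
          = (r : ℤ) - 1 := by ring
      rw [e4] at h4
      have h5 : (d : ℤ) ∣ (((r - 1 : ℕ) : ℤ)) := by
        have e5 : (((r - 1 : ℕ)) : ℤ) = (r : ℤ) - 1 := by omega
        rw [e5]
        exact h4
      obtain ⟨t, ht⟩ := Int.natCast_dvd_natCast.mp h5
      obtain ⟨N, hN⟩ := hdiv.1
      have htN : t < N := by
        by_contra hcon
        push_neg at hcon
        have := Nat.mul_le_mul_left d hcon
        omega
      have hs1 : 1 ≤ t + 1 := by omega
      have hmuladd : d * (t + 1) = d * t + d := by ring
      have hdsn : d * (t + 1) ≤ n := by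
        have := Nat.mul_le_mul_left d (by omega : t + 1 ≤ N)
        omega
      have hbl := (aux_block hσ hd hdiv hs1 hdsn) (d - 1) (by omega)
      have hr_eq : d * (t + 1) - (d - 1) = r := by omega
      rw [hr_eq] at hbl
      have hfst := congrArg Prod.fst (hbl.2.symm.trans hre)
      have hsnd := congrArg Prod.snd (hbl.2.symm.trans hre)
      simp only at hfst hsnd
      have hqs := aux_q hσ hd hdiv hs1 hdsn
      have hQs : (quotTab d σ (t + 1)).2 = (quotTab d σ b).2 + 1 := by
        have h6 := hqs.1
        have h7 := hqb.1
        have e6 : d * ((quotTab d σ b).2 + 1 + 1) = d * ((quotTab d σ b).2 + 1) + d := by ring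
        have h8 : d * ((quotTab d σ (t + 1)).2 + 1) = d * ((quotTab d σ b).2 + 1 + 1) := by
          omega
        have := Nat.eq_of_mul_eq_mul_left hd h8
        omega
      have hsle : t + 1 ≤ n / d := by
        rw [Nat.le_div_iff_mul_le hd, mul_comm]
        exact hdsn
      have hqsmem := hqrn (t + 1) ⟨hs1, hsle⟩ (by
        rw [Prod.ext_iff]
        exact ⟨hqs.2.trans (hfst.trans hqb.2.symm), hQs⟩)
      have := Nat.mul_le_mul_left d (by omega : a ≤ t)
      omega
    refine ⟨⟨hb1', hban, haN, le_of_eq hceq, hrn⟩, ?_⟩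
    rintro ⟨_, himp⟩
    have hlt := himp hceq
    rw [← hqa.2, ← hqb.2] at hlt
    exact hq2.2 hlt
  · rintro ⟨hp, hni⟩
    obtain ⟨_, _, hceq, hnrow⟩ := aux_dvd hσ hd hdiv hp hni
    obtain ⟨hb1', hban, haN, _, hrn⟩ := hp
    have hb1 : 1 ≤ b := by
      rcases Nat.eq_zero_or_pos b with h | h
      · rw [h, Nat.mul_zero] at hb1'; omega
      · exact h
    have hba : b < a := Nat.lt_of_mul_lt_mul_left hban
    have ha1 : 1 ≤ a := by omega
    have han : a ≤ n / d := by
      rw [Nat.le_div_iff_mul_le hd, mul_comm]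
      exact haN
    have hqa := aux_q hσ hd hdiv ha1 haN
    have hqb := aux_q hσ hd hdiv hb1 (by omega)
    have hQeq : (quotTab d σ a).2 = (quotTab d σ b).2 := by
      have h1 := hqa.1
      have h2 := hqb.1
      have h3 : d * ((quotTab d σ a).2 + 1) = d * ((quotTab d σ b).2 + 1) := by omega
      have := Nat.eq_of_mul_eq_mul_left hd h3
      omega
    have hqrn : ∀ s ∈ Set.Icc 1 (n / d), quotTab d σ s =
        ((quotTab d σ b).1, (quotTab d σ b).2 + 1) → a < s := by
      rintro s ⟨hs1, hsle⟩ hse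
      have hdsn : d * s ≤ n := by
        calc d * s ≤ d * (n / d) := Nat.mul_le_mul_left d hsle
        _ = n := hND
      have hqs := aux_q hσ hd hdiv hs1 hdsn
      have hQs : (quotTab d σ s).2 = (quotTab d σ b).2 + 1 := by rw [hse]
      have hrowq : (quotTab d σ s).1 = (quotTab d σ b).1 := by rw [hse]
      have hcs : (σ (d * s)).2 = (σ (d * b)).2 + d := by
        have h6 := hqs.1
        rw [hQs] at h6
        have h7 := hqb.1
        have e6 : d * ((quotTab d σ b).2 + 1 + 1) = d * ((quotTab d σ b).2 + 1) + d := by ring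
        omega
      have hbl := (aux_block hσ hd hdiv hs1 hdsn) (d - 1) (by omega)
      have hds : d ≤ d * s := Nat.le_mul_of_pos_right d hs1
      have hr1 : 1 ≤ d * s - (d - 1) := by omega
      have hrle : d * s - (d - 1) ≤ n := by omega
      have hre : σ (d * s - (d - 1)) = ((σ (d * b)).1, (σ (d * b)).2 + 1) := by
        rw [hbl.2, Prod.ext_iff]
        constructor
        · show (σ (d * s)).1 = (σ (d * b)).1
          rw [← hqs.2, ← hqb.2]
          exact hrowq
        · show (σ (d * s)).2 - (d - 1) = (σ (d * b)).2 + 1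
          omega
      have hlt := hrn (d * s - (d - 1)) ⟨hr1, hrle⟩ hre
      have hmuladd : d * (a + 1) = d * a + d := by ring
      have h8 : d * (a + 1) ≤ d * s := by omega
      have := Nat.le_of_mul_le_mul_left h8 hd
      omega
    refine ⟨⟨hb1, hba, han, le_of_eq hQeq, hqrn⟩, ?_⟩
    rintro ⟨_, himp⟩
    have hlt := himp hQeq
    rw [hqa.2, hqb.2] at hlt
    exact hnrow hlt

end Aux

/-- Let `σ` be a row-strict tableau of shape `λ ⊢ n` and `d` a divisor of `σ`.  Then
`(i, j) ↦ (di, dj)` is a bijection from the Springer pairs of `σ/d` that are not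
Springer inversions onto the Springer pairs of `σ` that are not Springer inversions.
Consequently `|pairs(σ)| − |inv(σ)| = |pairs(σ/d)| − |inv(σ/d)|`. -/
theorem stmt9 (L : List ℕ) (n d : ℕ) (hL : IsPartition L n) (σ : ℕ → ℕ × ℕ)
    (hσ : IsRST L n σ) (hd : 0 < d) (hdiv : TabDivisor n d σ) :
    Set.BijOn (fun p : ℕ × ℕ => (d * p.1, d * p.2))
      {p : ℕ × ℕ | SpringerPair (n / d) (quotTab d σ) p.1 p.2 ∧
        ¬ SpringerInv (n / d) (quotTab d σ) p.1 p.2}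
      {p : ℕ × ℕ | SpringerPair n σ p.1 p.2 ∧ ¬ SpringerInv n σ p.1 p.2} ∧
    (pairsCount n σ : ℤ) - (invCount n σ : ℤ)
      = (pairsCount (n / d) (quotTab d σ) : ℤ) - (invCount (n / d) (quotTab d σ) : ℤ) := by
  have hBij : Set.BijOn (fun p : ℕ × ℕ => (d * p.1, d * p.2))
      {p : ℕ × ℕ | SpringerPair (n / d) (quotTab d σ) p.1 p.2 ∧
        ¬ SpringerInv (n / d) (quotTab d σ) p.1 p.2}
      {p : ℕ × ℕ | SpringerPair n σ p.1 p.2 ∧ ¬ SpringerInv n σ p.1 p.2} := by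
    refine ⟨?_, ?_, ?_⟩
    · rintro ⟨a, b⟩ h
      exact (aux_corr hσ hd hdiv a b).mp h
    · rintro ⟨a, b⟩ _ ⟨a', b'⟩ _ h
      rw [Prod.ext_iff] at h
      simp only at h
      rw [Prod.ext_iff]
      exact ⟨Nat.eq_of_mul_eq_mul_left hd h.1, Nat.eq_of_mul_eq_mul_left hd h.2⟩
    · rintro ⟨i, j⟩ ⟨hp, hni⟩
      obtain ⟨hdi, hdj, _, _⟩ := aux_dvd hσ hd hdiv hp hni
      refine ⟨(i / d, j / d), ?_, ?_⟩
      · show SpringerPair (n / d) (quotTab d σ) (i / d) (j / d) ∧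
          ¬ SpringerInv (n / d) (quotTab d σ) (i / d) (j / d)
        apply (aux_corr hσ hd hdiv (i / d) (j / d)).mpr
        rw [Nat.mul_div_cancel' hdi, Nat.mul_div_cancel' hdj]
        exact ⟨hp, hni⟩
      · show (d * (i / d), d * (j / d)) = (i, j)
        rw [Nat.mul_div_cancel' hdi, Nat.mul_div_cancel' hdj]
  refine ⟨hBij, ?_⟩
  have hfin : ∀ (m : ℕ) (τ' : ℕ → ℕ × ℕ), {p : ℕ × ℕ | SpringerPair m τ' p.1 p.2}.Finite := by
    intro m τ'
    apply Set.Finite.subset (Set.finite_Icc ((1, 1) : ℕ × ℕ) (m, m))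
    rintro ⟨i, j⟩ ⟨h1, h2, h3, _⟩
    simp only [Set.mem_Icc, Prod.le_def]
    omega
  have key : ∀ (m : ℕ) (τ' : ℕ → ℕ × ℕ),
      (pairsCount m τ' : ℤ) - (invCount m τ' : ℤ)
        = ({p : ℕ × ℕ | SpringerPair m τ' p.1 p.2 ∧ ¬ SpringerInv m τ' p.1 p.2}.ncard : ℤ) := by
    intro m τ'
    have hsub : {p : ℕ × ℕ | SpringerInv m τ' p.1 p.2} ⊆
        {p : ℕ × ℕ | SpringerPair m τ' p.1 p.2} := fun p hp => hp.1
    have hdiff : {p : ℕ × ℕ | SpringerPair m τ' p.1 p.2} \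
          {p : ℕ × ℕ | SpringerInv m τ' p.1 p.2}
        = {p : ℕ × ℕ | SpringerPair m τ' p.1 p.2 ∧ ¬ SpringerInv m τ' p.1 p.2} := by
      ext p
      simp only [Set.mem_diff, Set.mem_setOf_eq]
    have h := Set.ncard_diff_add_ncard_of_subset hsub (hfin m τ')
    rw [hdiff] at h
    unfold pairsCount invCount
    omega
  rw [key n σ, key (n / d) (quotTab d σ), ← hBij.image_eq,
    Set.ncard_image_of_injOn hBij.injOn]
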